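/- arXiv:1302.1979 — 4 statements merged into one kernel-verified Lean document; each statement's English description precedes it below -/
import Mathlib

section
/- The family of resolvable subsets of a topological space X is closed under finite intersections. -/
open Set Topology

def Resolvable {X : Type*} [TopologicalSpace X] (E : Set X) : Prop :=
  ∀ F : Set X, IsClosed F → F.Nonempty → closure (F ∩ E) ∩ closure (F \ E) ≠ F

theorem resolvable_inter {X : Type*} [TopologicalSpace X] (E₁ E₂ : Set X)
    (h₁ : Resolvable E₁) (h₂ : Resolvable E₂) : Resolvable (E₁ ∩ E₂) := by
  intro F hF hFne heq
  set E : Set X := E₁ ∩ E₂ with hE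
  have hsub1 : F ⊆ closure (F ∩ E) := heq.superset.trans inter_subset_left
  have hsub2 : F ⊆ closure (F \ E) := heq.superset.trans inter_subset_right
  set U : Set X := F \ closure (F \ E₁) with hU
  have hcl1 : F ⊆ closure (F ∩ E₁) :=
    hsub1.trans (closure_mono (fun x hx => ⟨hx.1, hx.2.1⟩))
  have hUne : U.Nonempty := by
    by_contra hc
    push_neg at hc
    apply h₁ F hF hFne
    apply subset_antisymm
    · exact inter_subset_left.trans ((closure_mono inter_subset_left).trans
        hF.closure_eq.subset)
    · intro x hx
      refine ⟨hcl1 hx, ?_⟩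
      by_contra hxc
      exact hc.subset ⟨hx, hxc⟩
  -- key density claims on U
  have hkey1 : U ⊆ closure (U ∩ E₂) := by
    intro x hx
    rw [mem_closure_iff]
    intro V hV hxV
    have hx' : x ∈ closure (F ∩ E) := hsub1 hx.1
    rw [mem_closure_iff] at hx'
    obtain ⟨y, ⟨hyV, hyc⟩, hyF, hyE⟩ := hx' (V \ closure (F \ E₁))
      (hV.sdiff isClosed_closure) ⟨hxV, hx.2⟩
    exact ⟨y, hyV, ⟨⟨hyF, hyc⟩, hyE.2⟩⟩
  have hkey2 : U ⊆ closure (U \ E₂) := by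
    intro x hx
    rw [mem_closure_iff]
    intro V hV hxV
    have hx' : x ∈ closure (F \ E) := hsub2 hx.1
    rw [mem_closure_iff] at hx'
    obtain ⟨y, ⟨hyV, hyc⟩, hyF, hyE⟩ := hx' (V \ closure (F \ E₁))
      (hV.sdiff isClosed_closure) ⟨hxV, hx.2⟩
    have hyE2 : y ∉ E₂ := by
      intro hy2
      have hy1 : y ∉ E₁ := fun hy1 => hyE ⟨hy1, hy2⟩
      exact hyc (subset_closure ⟨hyF, hy1⟩)
    exact ⟨y, hyV, ⟨⟨hyF, hyc⟩, hyE2⟩⟩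
  set K : Set X := closure U with hK
  have hKne : K.Nonempty := hUne.mono subset_closure
  have c1 : K ⊆ closure (K ∩ E₂) :=
    calc K ⊆ closure (closure (U ∩ E₂)) := closure_mono hkey1
    _ = closure (U ∩ E₂) := closure_closure
    _ ⊆ closure (K ∩ E₂) := closure_mono (inter_subset_inter_left _ subset_closure)
  have c2 : K ⊆ closure (K \ E₂) :=
    calc K ⊆ closure (closure (U \ E₂)) := closure_mono hkey2
    _ = closure (U \ E₂) := closure_closure
    _ ⊆ closure (K \ E₂) := closure_mono (diff_subset_diff_left subset_closure)
  apply h₂ K isClosed_closure hKne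
  apply subset_antisymm
  · exact inter_subset_left.trans ((closure_mono inter_subset_left).trans
      closure_closure.subset)
  · exact fun x hx => ⟨c1 hx, c2 hx⟩
end

section
/- Let f : X → Y be a continuous function from a subspace X of the Cantor set onto a metrizable space Y. Then there exists a closed subset Z ⊆ X such that the restriction f|Z is nowhere open on Z (i.e., for every nonempty clopen subset U of X meeting Z, the restriction of f to U ∩ Z is not an open map onto its image), and the restriction f|(X \ Z) is piecewise open. -/
open Set Topology

/-- The Cantor set. -/
abbrev Cantor : Type := ℕ → Bool

/-- `f` restricted to `S` is an open map onto its image: the image of every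
relatively open subset of `S` is relatively open in `f '' S`. -/
def OpenOntoImage {X Y : Type*} [TopologicalSpace X] [TopologicalSpace Y]
    (f : X → Y) (S : Set X) : Prop :=
  ∀ U : Set X, IsOpen U → ∃ V : Set Y, IsOpen V ∧ f '' (U ∩ S) = V ∩ f '' S

/-- `f` is piecewise open on `S`: `S` admits a countable, pairwise disjoint cover by
sets closed in `S`, on each of which `f` is an open map onto its image. -/
def PiecewiseOpenOn {X Y : Type*} [TopologicalSpace X] [TopologicalSpace Y]
    (f : X → Y) (S : Set X) : Prop :=
  ∃ C : ℕ → Set X,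
    (∀ n, ∃ F : Set X, IsClosed F ∧ C n = F ∩ S) ∧
    Pairwise (Function.onFun Disjoint C) ∧
    (⋃ n, C n) = S ∧
    ∀ n, OpenOntoImage f (C n)

/-- `f` is nowhere open on `Z`: for every clopen `U ⊆ X` meeting `Z`, the
restriction of `f` to `U ∩ Z` is not open onto its image. -/
def NowhereOpenOn {X Y : Type*} [TopologicalSpace X] [TopologicalSpace Y]
    (f : X → Y) (Z : Set X) : Prop :=
  ∀ U : Set X, IsClopen U → (U ∩ Z).Nonempty → ¬ OpenOntoImage f (U ∩ Z)

namespace PWOaux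

open scoped Classical

/-! ### Generic lemmas about `OpenOntoImage` -/

lemma openOntoImage_empty {A B : Type*} [TopologicalSpace A] [TopologicalSpace B]
    (f : A → B) : OpenOntoImage f (∅ : Set A) := fun _U _hU => ⟨∅, isOpen_empty, by simp⟩

/-- Openness onto image is inherited by relatively open subsets. -/
lemma OpenOntoImage.inter_open {A B : Type*} [TopologicalSpace A] [TopologicalSpace B]
    {f : A → B} {S O : Set A} (hS : OpenOntoImage f S) (hO : IsOpen O) :
    OpenOntoImage f (O ∩ S) := by
  intro U hU
  obtain ⟨V, hV, hVeq⟩ := hS (U ∩ O) (hU.inter hO)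
  refine ⟨V, hV, ?_⟩
  have h1 : U ∩ (O ∩ S) = (U ∩ O) ∩ S := by rw [inter_assoc]
  rw [h1, hVeq]
  ext y
  constructor
  · rintro ⟨h1, h2⟩
    refine ⟨h1, ?_⟩
    have hy : y ∈ f '' ((U ∩ O) ∩ S) := hVeq ▸ ⟨h1, h2⟩
    exact image_mono (f := f) (show (U ∩ O) ∩ S ⊆ O ∩ S from fun z hz => ⟨hz.1.2, hz.2⟩) hy
  · rintro ⟨h1, h2⟩
    exact ⟨h1, image_mono (f := f) inter_subset_right h2⟩

/-! ### Cylinders: a countable clopen basis of the Cantor set -/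

def cyl (l : List Bool) : Set Cantor := {x | ∀ i < l.length, x i = l.getD i false}

lemma isClopen_cyl (l : List Bool) : IsClopen (cyl l) := by
  have h : cyl l = ⋂ i : Fin l.length, (fun x : Cantor => x i.1) ⁻¹' {l.getD i.1 false} := by
    ext x
    constructor
    · intro hx
      exact mem_iInter.mpr fun i => hx i.1 i.2
    · intro hx i hi
      exact mem_iInter.mp hx ⟨i, hi⟩
  rw [h]
  exact isClopen_iInter_of_finite fun i =>
    (isClopen_discrete _).preimage (continuous_apply _)

lemma exists_cyl {V : Set Cantor} (hV : IsOpen V) {x : Cantor} (hx : x ∈ V) :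
    ∃ l : List Bool, x ∈ cyl l ∧ cyl l ⊆ V := by
  have hb := isTopologicalBasis_pi (fun _ : ℕ => TopologicalSpace.isTopologicalBasis_opens (α := Bool))
  obtain ⟨S, hS, hxS, hSV⟩ := hb.exists_subset_of_mem_open hx hV
  obtain ⟨U, F, _hU, rfl⟩ := hS
  set N := (F.sup id) + 1 with hN
  have hlen : (List.ofFn fun i : Fin N => x i.1).length = N := List.length_ofFn
  have hget : ∀ i, ∀ hi : i < N, (List.ofFn fun i : Fin N => x i.1).getD i false = x i := by
    intro i hi
    rw [List.getD_eq_getElem _ _ (by rw [hlen]; exact hi), List.getElem_ofFn]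
  refine ⟨List.ofFn (fun i : Fin N => x i.1), ?_, ?_⟩
  · intro i hi
    rw [hlen] at hi
    rw [hget i hi]
  · intro y hy
    apply hSV
    intro i hiF
    have hiN : i < N := by
      have h1 := Finset.le_sup (f := id) hiF
      simp only [id_eq] at h1
      omega
    have hyi : y i = x i := by
      have h2 := hy i (by rw [hlen]; exact hiN)
      rw [hget i hiN] at h2
      exact h2
    rw [hyi]
    exact hxS i hiF

section Main

variable (X : Set Cantor) {Y : Type*} [TopologicalSpace Y] (f : X → Y)

/-- Countable clopen basis of the subspace `X`. -/
noncomputable def bb (n : ℕ) : Set X :=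
  Subtype.val ⁻¹' cyl ((Encodable.decode (α := List Bool) n).getD [])

lemma isClopen_bb (n : ℕ) : IsClopen (bb X n) :=
  (isClopen_cyl _).preimage continuous_subtype_val

lemma isOpen_bb (n : ℕ) : IsOpen (bb X n) := (isClopen_bb X n).isOpen

lemma bb_basis {U : Set X} (hU : IsOpen U) {x : X} (hx : x ∈ U) :
    ∃ n, x ∈ bb X n ∧ bb X n ⊆ U := by
  obtain ⟨V, hV, hVU⟩ := isOpen_induced_iff.mp hU
  obtain ⟨l, hxl, hlV⟩ := exists_cyl hV (by rw [← hVU] at hx; exact hx)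
  refine ⟨Encodable.encode l, ?_, ?_⟩
  · simp only [bb, Encodable.encodek, Option.getD_some]
    exact hxl
  · simp only [bb, Encodable.encodek, Option.getD_some]
    rw [← hVU]
    exact fun z hz => hlV hz

/-- `n` is good for `K` if `f` is open onto its image on `bb n ∩ K`. -/
def good (K : Set X) (n : ℕ) : Prop := OpenOntoImage f (bb X n ∩ K)

/-- Derivative: remove from `K` all good basic clopen pieces. -/
def DD (K : Set X) : Set X := {x | x ∈ K ∧ ∀ n, good X f K n → x ∉ bb X n}

lemma DD_subset (K : Set X) : DD X f K ⊆ K := fun _ hx => hx.1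

lemma isClosed_DD {K : Set X} (hK : IsClosed K) : IsClosed (DD X f K) := by
  have h : DD X f K = K ∩ ⋂ (n : ℕ) (_ : good X f K n), (bb X n)ᶜ := by
    ext x
    simp [DD, mem_iInter]
  rw [h]
  exact hK.inter (isClosed_iInter fun n => isClosed_iInter fun _ =>
    (isOpen_bb X n).isClosed_compl)

/-- Transfinite iteration of the derivative. -/
noncomputable def J (o : Ordinal) : Set X :=
  Ordinal.limitRecOn o univ (fun _ K => DD X f K)
    (fun o _ ih => ⋂ (β : Ordinal) (h : β < o), ih β h)

lemma J_zero : J X f 0 = univ := Ordinal.limitRecOn_zero _ _ _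

lemma J_succ (α : Ordinal) : J X f (α + 1) = DD X f (J X f α) := by
  rw [J, Ordinal.add_one_eq_succ, Ordinal.limitRecOn_succ]
  rfl

lemma J_limit {α : Ordinal} (hα : Order.IsSuccLimit α) :
    J X f α = ⋂ (β : Ordinal) (_ : β < α), J X f β := by
  rw [J, Ordinal.limitRecOn_limit _ _ _ _ hα]
  rfl

lemma isClosed_J (α : Ordinal) : IsClosed (J X f α) := by
  induction α using Ordinal.induction with
  | h α IH =>
    rcases (Ordinal.zero_or_succ_or_isSuccLimit α).imp_right (Or.imp_left fun ⟨β, h⟩ => (⟨β, h.symm⟩ : ∃ β, α = Order.succ β)) with h0 | ⟨β, hβ⟩ | hl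
    · rw [h0, J_zero]; exact isClosed_univ
    · rw [hβ, ← Ordinal.add_one_eq_succ, J_succ]
      exact isClosed_DD X f (IH β (by rw [hβ]; exact Order.lt_succ β))
    · rw [J_limit X f hl]
      exact isClosed_iInter fun β => isClosed_iInter fun hb => IH β hb

lemma J_antitone : ∀ α β : Ordinal, β ≤ α → J X f α ⊆ J X f β := by
  intro α
  induction α using Ordinal.induction with
  | h α IH =>
    intro β hβ
    rcases eq_or_lt_of_le hβ with rfl | hlt
    · exact subset_rfl
    rcases (Ordinal.zero_or_succ_or_isSuccLimit α).imp_right (Or.imp_left fun ⟨β, h⟩ => (⟨β, h.symm⟩ : ∃ β, α = Order.succ β)) with h0 | ⟨γ, hγ⟩ | hl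
    · exact absurd hlt (by simp [h0])
    · have hβγ : β ≤ γ := by
        rw [hγ] at hlt; exact Order.lt_succ_iff.mp hlt
      have h1 : J X f α ⊆ J X f γ := by
        rw [hγ, ← Ordinal.add_one_eq_succ, J_succ]
        exact DD_subset X f _
      exact h1.trans (IH γ (by rw [hγ]; exact Order.lt_succ γ) β hβγ)
    · rw [J_limit X f hl]
      exact iInter_subset_of_subset β (iInter_subset_of_subset hlt subset_rfl)

lemma bb_inter_J_succ {α : Ordinal} {n : ℕ} (hg : good X f (J X f α) n) :
    bb X n ∩ J X f (α + 1) = ∅ := by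
  rw [J_succ]
  ext x
  simp only [mem_inter_iff, mem_empty_iff_false, iff_false, not_and]
  intro hxb hxD
  exact hxD.2 n hg hxb

lemma bb_inter_J_of_lt {α β : Ordinal} {n : ℕ} (hg : good X f (J X f α) n)
    (hlt : α < β) : bb X n ∩ J X f β = ∅ := by
  have h2 : J X f β ⊆ J X f (α + 1) :=
    J_antitone X f β (α + 1) (by rw [Ordinal.add_one_eq_succ]; exact Order.succ_le_of_lt hlt)
  have := inter_subset_inter_right (bb X n) h2
  rw [bb_inter_J_succ X f hg] at this
  exact eq_empty_of_subset_empty this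

lemma exists_fixed : ∃ α : Ordinal.{0}, DD X f (J X f α) = J X f α := by
  by_contra h
  push_neg at h
  have key : ∀ α : Ordinal, ∃ n, good X f (J X f α) n ∧ (bb X n ∩ J X f α).Nonempty := by
    intro α
    have hsub := DD_subset X f (J X f α)
    have hns : ¬ J X f α ⊆ DD X f (J X f α) := fun hh => h α (le_antisymm hsub hh)
    obtain ⟨x, hxJ, hxD⟩ := not_subset.mp hns
    have : ¬ (∀ n, good X f (J X f α) n → x ∉ bb X n) := fun hc => hxD ⟨hxJ, hc⟩
    push_neg at this
    obtain ⟨n, hg, hxb⟩ := this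
    exact ⟨n, hg, ⟨x, hxb, hxJ⟩⟩
  choose g hg1 hg2 using key
  have key2 : ∀ {a b : Ordinal.{0}}, a < b → g a = g b → False := by
    intro a b hlt he
    have h1 := bb_inter_J_of_lt X f (hg1 a) hlt
    have h2 := hg2 b
    rw [← he] at h2
    rw [h1] at h2
    exact h2.ne_empty rfl
  have ginj : Function.Injective g := by
    intro a b hab
    by_contra hne
    rcases Ne.lt_or_gt hne with h1 | h1
    · exact key2 h1 hab
    · exact key2 h1 hab.symm
  exact not_injective_of_ordinal g ginj

/-! ### Pieces -/

/-- The part of `bb m`, `m < n`, removed at stage `α`. -/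
noncomputable def rem (α : Ordinal) (n : ℕ) : Set X :=
  ⋃ m ∈ Finset.range n, ⋃ (_ : good X f (J X f α) m), bb X m

lemma isOpen_rem (α : Ordinal) (n : ℕ) : IsOpen (rem X f α n) :=
  isOpen_biUnion fun m _ => isOpen_iUnion fun _ => isOpen_bb X m

lemma isClosed_rem (α : Ordinal) (n : ℕ) : IsClosed (rem X f α n) := by
  refine Set.Finite.isClosed_biUnion (Finset.finite_toSet _) fun m _ => ?_
  by_cases h : good X f (J X f α) m
  · simp only [h, iUnion_true]
    exact (isClopen_bb X m).isClosed
  · simp only [h, iUnion_false]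
    exact isClosed_empty

lemma mem_rem {α : Ordinal} {n : ℕ} {x : X} :
    x ∈ rem X f α n ↔ ∃ m, m < n ∧ good X f (J X f α) m ∧ x ∈ bb X m := by
  simp [rem, Finset.mem_range]
  tauto

noncomputable def piece (α : Ordinal) (n : ℕ) : Set X :=
  if good X f (J X f α) n then (bb X n ∩ J X f α) \ rem X f α n else ∅

lemma isClosed_piece (α : Ordinal) (n : ℕ) : IsClosed (piece X f α n) := by
  rw [piece]
  split
  · exact (((isClopen_bb X n).isClosed).inter (isClosed_J X f α)).sdiff (isOpen_rem X f α n)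
  · exact isClosed_empty

lemma openOntoImage_piece (α : Ordinal) (n : ℕ) : OpenOntoImage f (piece X f α n) := by
  rw [piece]
  split
  · next h =>
    have := OpenOntoImage.inter_open (h : OpenOntoImage f (bb X n ∩ J X f α))
      (isClosed_rem X f α n).isOpen_compl
    rwa [← diff_eq_compl_inter] at this
  · exact openOntoImage_empty f

lemma piece_subset (α : Ordinal) (n : ℕ) :
    piece X f α n ⊆ J X f α \ J X f (α + 1) := by
  rw [piece]
  split
  · next h =>
    rintro x ⟨⟨hxb, hxJ⟩, -⟩
    refine ⟨hxJ, ?_⟩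
    rw [J_succ]
    intro hxD
    exact hxD.2 n h hxb
  · exact empty_subset _

lemma iUnion_piece (α : Ordinal) :
    (⋃ n, piece X f α n) = J X f α \ J X f (α + 1) := by
  apply subset_antisymm
  · exact iUnion_subset fun n => piece_subset X f α n
  · rintro x ⟨hxJ, hxD⟩
    rw [J_succ] at hxD
    have hex : ∃ n, good X f (J X f α) n ∧ x ∈ bb X n := by
      by_contra hc
      push_neg at hc
      exact hxD ⟨hxJ, fun n hg => hc n hg⟩
    have hn := Nat.find_spec hex
    refine mem_iUnion.mpr ⟨Nat.find hex, ?_⟩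
    rw [piece, if_pos hn.1]
    refine ⟨⟨hn.2, hxJ⟩, ?_⟩
    intro hmem
    obtain ⟨m, hmn, hgm, hxm⟩ := (mem_rem X f).mp hmem
    exact Nat.find_min hex hmn ⟨hgm, hxm⟩

lemma piece_disjoint (α : Ordinal) {m n : ℕ} (hmn : m ≠ n) :
    Disjoint (piece X f α m) (piece X f α n) := by
  have key : ∀ {a b : ℕ}, a < b → Disjoint (piece X f α a) (piece X f α b) := by
    intro a b hab
    rw [disjoint_left]
    intro x hxa hxb
    rw [piece] at hxa hxb
    by_cases ha : good X f (J X f α) a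
    · rw [if_pos ha] at hxa
      by_cases hb : good X f (J X f α) b
      · rw [if_pos hb] at hxb
        exact hxb.2 ((mem_rem X f).mpr ⟨a, hab, ha, hxa.1.1⟩)
      · rw [if_neg hb] at hxb; exact hxb
    · rw [if_neg ha] at hxa; exact hxa
  rcases Ne.lt_or_gt hmn with h1 | h1
  · exact key h1
  · exact (key h1).symm

lemma piece_nonempty_elim {α : Ordinal} {n : ℕ} (h : (piece X f α n).Nonempty) :
    good X f (J X f α) n ∧ (bb X n ∩ J X f α).Nonempty := by
  obtain ⟨x, hx⟩ := h
  rw [piece] at hx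
  by_cases hg : good X f (J X f α) n
  · rw [if_pos hg] at hx
    exact ⟨hg, ⟨x, hx.1⟩⟩
  · rw [if_neg hg] at hx
    exact absurd hx (notMem_empty x)

lemma piece_stage_unique {α β : Ordinal.{0}} {n : ℕ} (hα : (piece X f α n).Nonempty)
    (hβ : (piece X f β n).Nonempty) : α = β := by
  by_contra hne
  have key : ∀ {a b : Ordinal.{0}}, a < b → (piece X f a n).Nonempty →
      (piece X f b n).Nonempty → False := by
    intro a b hab ha hb
    have h1 := (piece_nonempty_elim X f ha).1
    have h2 := (piece_nonempty_elim X f hb).2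
    rw [bb_inter_J_of_lt X f h1 hab] at h2
    exact h2.ne_empty rfl
  rcases Ne.lt_or_gt hne with h1 | h1
  · exact key h1 hα hβ
  · exact key h1 hβ hα

lemma exit {α₀ : Ordinal} {x : X} (hx : x ∉ J X f α₀) :
    ∃ γ, γ < α₀ ∧ x ∈ J X f γ ∧ x ∉ J X f (γ + 1) := by
  have hS : {β : Ordinal | x ∉ J X f β}.Nonempty := ⟨α₀, hx⟩
  set b := Ordinal.lt_wf.min _ hS with hb
  have hmem : x ∉ J X f b := Ordinal.lt_wf.min_mem _ hS
  have hmin : ∀ c, c < b → x ∈ J X f c := by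
    intro c hc
    by_contra hc'
    exact Ordinal.lt_wf.not_lt_min _ hc' hc
  have hb0 : b ≠ 0 := by
    intro h0
    rw [h0, J_zero] at hmem
    exact hmem (mem_univ x)
  have hbnl : ¬ Order.IsSuccLimit b := by
    intro hl
    apply hmem
    rw [J_limit X f hl]
    exact mem_iInter.mpr fun β => mem_iInter.mpr fun hβ => hmin β hβ
  rcases (Ordinal.zero_or_succ_or_isSuccLimit b).imp_right (Or.imp_left fun ⟨β, h⟩ => (⟨β, h.symm⟩ : ∃ β, b = Order.succ β)) with h0 | ⟨γ, hγ⟩ | hl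
  · exact absurd h0 hb0
  · refine ⟨γ, ?_, ?_, ?_⟩
    · have hble : b ≤ α₀ := not_lt.mp (fun hlt => Ordinal.lt_wf.not_lt_min _ hx hlt)
      rw [hγ] at hble
      exact Order.succ_le_iff.mp hble
    · exact hmin γ (by rw [hγ]; exact Order.lt_succ γ)
    · rw [Ordinal.add_one_eq_succ, ← hγ]; exact hmem
  · exact absurd hl hbnl

end Main

end PWOaux

open PWOaux in
theorem exists_closed_nowhereOpen_piecewiseOpen_compl
    (X : Set Cantor) (Y : Type*) [TopologicalSpace Y]
    [TopologicalSpace.MetrizableSpace Y]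
    (f : X → Y) (hf : Continuous f) (hsurj : Function.Surjective f) :
    ∃ Z : Set X, IsClosed Z ∧ NowhereOpenOn f Z ∧ PiecewiseOpenOn f Zᶜ := by
  classical
  obtain ⟨α₀, hfix⟩ := exists_fixed X f
  set Z := J X f α₀ with hZ
  have hZsucc : J X f (α₀ + 1) = Z := by rw [J_succ, hfix]
  have hJle : ∀ α, α ≤ α₀ → Z ⊆ J X f (α + 1) := by
    intro α hα
    rcases eq_or_lt_of_le hα with rfl | hlt
    · rw [hZsucc]
    · exact J_antitone X f α₀ (α + 1)
        (by rw [Ordinal.add_one_eq_succ]; exact Order.succ_le_of_lt hlt)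
  have hpieceZ : ∀ α, α ≤ α₀ → ∀ n, piece X f α n ∩ Z = ∅ := by
    intro α hα n
    apply eq_empty_of_subset_empty
    rintro x ⟨hxp, hxZ⟩
    have h1 := piece_subset X f α n hxp
    exact h1.2 (hJle α hα hxZ)
  refine ⟨Z, isClosed_J X f α₀, ?_, ?_⟩
  · -- nowhere open
    intro U hU hne hopen
    obtain ⟨x, hxU, hxZ⟩ := hne
    obtain ⟨n, hxb, hbU⟩ := bb_basis X hU.isOpen hxU
    have heq : bb X n ∩ (U ∩ Z) = bb X n ∩ Z := by
      ext y
      constructor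
      · rintro ⟨h1, _, h3⟩; exact ⟨h1, h3⟩
      · rintro ⟨h1, h2⟩; exact ⟨h1, hbU h1, h2⟩
    have hgood : good X f (J X f α₀) n := by
      have := OpenOntoImage.inter_open hopen (isOpen_bb X n)
      rw [heq] at this
      exact this
    have h1 := bb_inter_J_succ X f hgood
    rw [hZsucc] at h1
    rw [eq_empty_iff_forall_notMem] at h1
    exact h1 x ⟨hxb, hxZ⟩
  · -- piecewise open on complement
    refine ⟨fun n => if h : ∃ α, α ≤ α₀ ∧ (piece X f α n).Nonempty
      then piece X f h.choose n else ∅, ?_, ?_, ?_, ?_⟩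
    · intro n
      dsimp only
      split
      · next h =>
        refine ⟨piece X f h.choose n, isClosed_piece X f _ n, ?_⟩
        apply subset_antisymm
        · intro x hx
          refine ⟨hx, ?_⟩
          intro hxZ
          have := hpieceZ h.choose h.choose_spec.1 n
          rw [eq_empty_iff_forall_notMem] at this
          exact this x ⟨hx, hxZ⟩
        · exact inter_subset_left
      · exact ⟨∅, isClosed_empty, by simp⟩
    · -- pairwise disjoint
      intro m n hmn
      simp only [Function.onFun]
      split
      · next hm =>
        split
        · next hn =>
          rcases eq_or_ne hm.choose hn.choose with heq | hne
          · rw [heq]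
            exact piece_disjoint X f _ hmn
          · have key : ∀ {a b : Ordinal.{0}}, a < b →
                Disjoint (piece X f a m) (piece X f b n) := by
              intro a b hab
              rw [disjoint_left]
              intro x hxa hxb
              have h1 := piece_subset X f a m hxa
              have h2 := piece_subset X f b n hxb
              have : J X f b ⊆ J X f (a + 1) := J_antitone X f b (a + 1)
                (by rw [Ordinal.add_one_eq_succ]; exact Order.succ_le_of_lt hab)
              exact h1.2 (this h2.1)
            rcases Ne.lt_or_gt hne with h1 | h1
            · exact key h1
            · have key2 : ∀ {a b : Ordinal.{0}}, a < b →
                  Disjoint (piece X f b m) (piece X f a n) := by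
                intro a b hab
                rw [disjoint_left]
                intro x hxa hxb
                have h1 := piece_subset X f b m hxa
                have h2 := piece_subset X f a n hxb
                have : J X f b ⊆ J X f (a + 1) := J_antitone X f b (a + 1)
                  (by rw [Ordinal.add_one_eq_succ]; exact Order.succ_le_of_lt hab)
                exact h2.2 (this h1.1)
              exact key2 h1
        · next => exact disjoint_bot_right
      · next => exact disjoint_bot_left
    · -- union = Zᶜ
      apply subset_antisymm
      · apply iUnion_subset
        intro n
        split
        · next h =>
          intro x hx hxZ
          have := hpieceZ h.choose h.choose_spec.1 n
          rw [eq_empty_iff_forall_notMem] at this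
          exact this x ⟨hx, hxZ⟩
        · exact empty_subset _
      · intro x hx
        obtain ⟨γ, hγ, hxJ, hxJ'⟩ := exit X f hx
        have hxpieces : x ∈ ⋃ n, piece X f γ n := by
          rw [iUnion_piece]
          exact ⟨hxJ, hxJ'⟩
        obtain ⟨n, hxn⟩ := mem_iUnion.mp hxpieces
        refine mem_iUnion.mpr ⟨n, ?_⟩
        have hex : ∃ α, α ≤ α₀ ∧ (piece X f α n).Nonempty := ⟨γ, le_of_lt hγ, ⟨x, hxn⟩⟩
        rw [dif_pos hex]
        have : hex.choose = γ := piece_stage_unique X f hex.choose_spec.2 ⟨x, hxn⟩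
        rw [this]
        exact hxn
    · intro n
      dsimp only
      split
      · next => exact openOntoImage_piece X f _ n
      · next => exact openOntoImage_empty f
end

section
/- Let X ⊆ Cantor set and f : X → Y continuous. If the derived set Z obtained by transfinitely removing clopen pieces on which f is open is empty, then f is piecewise open: X is a countable union of pairwise disjoint closed sets on each of which f restricts to an open map. -/
open Set Topology

def RelClopen {X : Type*} [TopologicalSpace X] (S V : Set X) : Prop :=
  (∃ W : Set X, IsOpen W ∧ V = W ∩ S) ∧ (∃ W : Set X, IsClosed W ∧ V = W ∩ S)

section AuxLemmas

variable {T : Type*} [TopologicalSpace T] {Y : Type*} [TopologicalSpace Y]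

lemma openOntoImage_empty (f : T → Y) : OpenOntoImage f (∅ : Set T) :=
  fun _U _hU => ⟨∅, isOpen_empty, by simp⟩

/-- A relatively open subset of a set on which `f` is open onto its image again has
this property. -/
lemma openOntoImage_of_open_inter (f : T → Y) {V V' O : Set T} (hO : IsOpen O)
    (hV' : V' = O ∩ V) (h : OpenOntoImage f V) : OpenOntoImage f V' := by
  intro U hU
  obtain ⟨W, hW, hWe⟩ := h (U ∩ O) (hU.inter hO)
  have h1 : f '' (U ∩ V') = W ∩ f '' V := by
    rw [hV', ← hWe, inter_assoc]
  refine ⟨W, hW, ?_⟩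
  rw [h1]
  apply Subset.antisymm
  · intro y hy
    have hy2 : y ∈ f '' (U ∩ O ∩ V) := by rw [hWe]; exact hy
    refine ⟨hy.1, ?_⟩
    obtain ⟨x, hx, rfl⟩ := hy2
    exact ⟨x, by rw [hV']; exact ⟨hx.1.2, hx.2⟩, rfl⟩
  · intro y hy
    refine ⟨hy.1, ?_⟩
    obtain ⟨x, hx, rfl⟩ := hy.2
    exact ⟨x, by rw [hV'] at hx; exact hx.2, rfl⟩

/-- Cylinder sets in the Cantor space. -/
def Cyl (l : List (ℕ × Bool)) : Set Cantor := {x | ∀ p ∈ l, x p.1 = p.2}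

lemma isClopen_Cyl (l : List (ℕ × Bool)) : IsClopen (Cyl l) := by
  have h : Cyl l = ⋂ p ∈ l, {x : Cantor | x p.1 = p.2} := by
    ext x; simp [Cyl]
  rw [h]
  refine (List.finite_toSet l).isClopen_biInter fun p _ => ?_
  have : {x : Cantor | x p.1 = p.2} = (fun x : Cantor => x p.1) ⁻¹' {p.2} := rfl
  rw [this]
  exact (isClopen_discrete {p.2}).preimage (continuous_apply p.1)

lemma isTopologicalBasis_Cyl :
    TopologicalSpace.IsTopologicalBasis (Set.range Cyl) := by
  refine TopologicalSpace.isTopologicalBasis_of_isOpen_of_nhds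
    (fun s hs => ?_) (fun a u ha hu => ?_)
  · obtain ⟨l, rfl⟩ := hs; exact (isClopen_Cyl l).isOpen
  · obtain ⟨S, hS, haS, hSu⟩ :=
      (isTopologicalBasis_pi
        (fun _ : ℕ => TopologicalSpace.isTopologicalBasis_opens)).exists_subset_of_mem_open
        ha hu
    obtain ⟨U, F, _hUo, rfl⟩ := hS
    refine ⟨Cyl (F.toList.map fun i => (i, a i)), ⟨_, rfl⟩, ?_, ?_⟩
    · intro p hp
      simp only [List.mem_map, Finset.mem_toList] at hp
      obtain ⟨i, _hi, rfl⟩ := hp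
      rfl
    · intro y hy
      apply hSu
      intro i hi
      have : y i = a i := by
        apply hy (i, a i)
        simp only [List.mem_map, Finset.mem_toList]
        exact ⟨i, hi, rfl⟩
      rw [this]
      exact haS i hi

/-- The subspace `X` of the Cantor space has a countable basis of clopen sets. -/
lemma exists_clopen_basis (X : Set Cantor) :
    ∃ B : ℕ → Set X, (∀ n, IsClopen (B n)) ∧
      TopologicalSpace.IsTopologicalBasis (Set.range B) := by
  classical
  let d : ℕ → List (ℕ × Bool) := fun n => (Encodable.decode (α := List (ℕ × Bool)) n).getD []
  have hd : Function.Surjective d := fun l => ⟨Encodable.encode l, by simp [d]⟩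
  refine ⟨fun n => Subtype.val ⁻¹' Cyl (d n), fun n => (isClopen_Cyl (d n)).preimage
    continuous_subtype_val, ?_⟩
  have h := isTopologicalBasis_subtype isTopologicalBasis_Cyl (· ∈ X)
  convert h using 1
  ext s
  constructor
  · rintro ⟨n, rfl⟩; exact ⟨Cyl (d n), ⟨d n, rfl⟩, rfl⟩
  · rintro ⟨t, ⟨l, rfl⟩, rfl⟩
    obtain ⟨n, rfl⟩ := hd l
    exact ⟨n, rfl⟩

lemma partialSups_inter (K : ℕ → Set T) (A : Set T) (n : ℕ) :
    partialSups (fun m => K m ∩ A) n = partialSups K n ∩ A := by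
  induction n with
  | zero => simp
  | succ n ih =>
      simp only [← Order.succ_eq_add_one, partialSups_succ, ih]
      change (partialSups K n ∩ A) ∪ (K (n + 1) ∩ A) = _
      rw [← union_inter_distrib_right]
      rfl

lemma disjointed_inter (K : ℕ → Set T) (A : Set T) (n : ℕ) :
    disjointed (fun m => K m ∩ A) n = disjointed K n ∩ A := by
  cases n with
  | zero => simp [disjointed_zero]
  | succ n =>
      rw [disjointed_add_one, disjointed_add_one, partialSups_inter]
      ext x
      simp only [mem_diff, mem_inter_iff]
      change _ ∧ ¬ (x ∈ partialSups K n ∩ A) ↔ _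
      simp only [mem_inter_iff]
      tauto

lemma isClopen_partialSups {K : ℕ → Set T} (hK : ∀ n, IsClopen (K n)) (n : ℕ) :
    IsClopen ((partialSups K n : Set T)) := by
  induction n with
  | zero => simpa using hK 0
  | succ n ih =>
      rw [← Order.succ_eq_add_one, partialSups_succ]
      exact ih.union (hK (n + 1))

lemma isClopen_disjointed {K : ℕ → Set T} (hK : ∀ n, IsClopen (K n)) (n : ℕ) :
    IsClopen (disjointed K n) := by
  cases n with
  | zero => rw [disjointed_zero]; exact hK 0
  | succ n =>
      rw [disjointed_add_one]
      exact (hK (n + 1)).diff (isClopen_partialSups hK n)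

/-- The key decomposition: the union of a family of relatively open sets on each of which
`f` is open onto image can be written as a countable disjoint union of relatively clopen
pieces, each of which is an open subset of a member of the family. -/
lemma decomp (B : ℕ → Set T) (hBc : ∀ n, IsClopen (B n))
    (hB : TopologicalSpace.IsTopologicalBasis (Set.range B))
    (f : T → Y) (A : Set T) (𝒱 : Set (Set T))
    (h𝒱 : ∀ V ∈ 𝒱, (∃ W, IsOpen W ∧ V = W ∩ A) ∧ OpenOntoImage f V) :
    ∃ D : ℕ → Set T, Pairwise (Function.onFun Disjoint D) ∧ (⋃ n, D n) = ⋃₀ 𝒱 ∧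
      (∀ n, ∃ K, IsClosed K ∧ D n = K ∩ A) ∧ (∀ n, OpenOntoImage f (D n)) := by
  classical
  set K : ℕ → Set T := fun n => if ∃ V ∈ 𝒱, B n ∩ A ⊆ V then B n else ∅ with hKdef
  have hKc : ∀ n, IsClopen (K n) := by
    intro n
    by_cases h : ∃ V ∈ 𝒱, B n ∩ A ⊆ V
    · simp only [hKdef, if_pos h]; exact hBc n
    · simp only [hKdef, if_neg h]; exact isClopen_empty
  set G : ℕ → Set T := fun n => K n ∩ A with hGdef
  have hGsub : ∀ n, ∀ x ∈ G n, ∃ V ∈ 𝒱, x ∈ V := by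
    intro n x hx
    by_cases h : ∃ V ∈ 𝒱, B n ∩ A ⊆ V
    · have hx' : x ∈ B n ∩ A := by simpa only [hGdef, hKdef, if_pos h] using hx
      obtain ⟨V, hV, hsub⟩ := h
      exact ⟨V, hV, hsub hx'⟩
    · simp only [hGdef, hKdef, if_neg h, empty_inter] at hx
      exact absurd hx (notMem_empty x)
  have hGU : (⋃ n, G n) = ⋃₀ 𝒱 := by
    apply Subset.antisymm
    · intro x hx
      obtain ⟨n, hn⟩ := mem_iUnion.mp hx
      obtain ⟨V, hV, hxV⟩ := hGsub n x hn
      exact ⟨V, hV, hxV⟩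
    · rintro x ⟨V, hV, hxV⟩
      obtain ⟨⟨W, hWo, hVW⟩, _⟩ := h𝒱 V hV
      have hxW : x ∈ W := by rw [hVW] at hxV; exact hxV.1
      have hxA : x ∈ A := by rw [hVW] at hxV; exact hxV.2
      obtain ⟨s, ⟨n, rfl⟩, hxs, hsW⟩ := hB.exists_subset_of_mem_open hxW hWo
      have hcond : ∃ V' ∈ 𝒱, B n ∩ A ⊆ V' :=
        ⟨V, hV, by rw [hVW]; exact inter_subset_inter_left A hsW⟩
      refine mem_iUnion.mpr ⟨n, ?_⟩
      simp only [hGdef, hKdef, if_pos hcond]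
      exact ⟨hxs, hxA⟩
  refine ⟨disjointed G, disjoint_disjointed G, by rw [iUnion_disjointed, hGU], ?_, ?_⟩
  · intro n
    refine ⟨disjointed K n, (isClopen_disjointed hKc n).isClosed, ?_⟩
    exact disjointed_inter K A n
  · intro n
    have hDeq : disjointed G n = disjointed K n ∩ A := disjointed_inter K A n
    by_cases h : ∃ V ∈ 𝒱, B n ∩ A ⊆ V
    · have hcond := h
      obtain ⟨V, hV, hsub⟩ := h
      have hVA : V ⊆ A := by
        obtain ⟨⟨W, _, hVW⟩, _⟩ := h𝒱 V hV
        rw [hVW]; exact inter_subset_right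
      have hDV : disjointed G n ⊆ V := by
        refine (disjointed_subset G n).trans ?_
        simp only [hGdef, hKdef, if_pos hcond]
        exact hsub
      have hDeq2 : disjointed G n = disjointed K n ∩ V := by
        apply Subset.antisymm
        · intro x hx
          exact ⟨(hDeq ▸ hx).1, hDV hx⟩
        · intro x hx
          rw [hDeq]
          exact ⟨hx.1, hVA hx.2⟩
      exact openOntoImage_of_open_inter f (isClopen_disjointed hKc n).isOpen hDeq2
        (h𝒱 V hV).2
    · have : disjointed G n = ∅ := by
        have h1 : G n = ∅ := by simp only [hGdef, hKdef, if_neg h, empty_inter]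
        exact eq_empty_of_subset_empty (h1 ▸ disjointed_subset G n)
      rw [this]
      exact openOntoImage_empty f

/-- Packaging: a countable pairwise disjoint family can be reindexed by `ℕ`. -/
lemma package (f : T → Y) {ι : Type*} [Countable ι] (F : ι → Set T)
    (hcl : ∀ i, IsClosed (F i)) (hdisj : Pairwise (Function.onFun Disjoint F))
    (hun : (⋃ i, F i) = univ) (hopen : ∀ i, OpenOntoImage f (F i)) :
    ∃ C : ℕ → Set T,
      (∀ n, IsClosed (C n)) ∧
      Pairwise (Function.onFun Disjoint C) ∧
      (⋃ n, C n) = univ ∧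
      ∀ n, OpenOntoImage f (C n) := by
  classical
  obtain ⟨e, he⟩ := countable_iff_exists_injective ι |>.mp ‹_›
  set C : ℕ → Set T := fun n => if h : ∃ i, e i = n then F h.choose else ∅ with hCdef
  refine ⟨C, ?_, ?_, ?_, ?_⟩
  · intro n
    by_cases h : ∃ i, e i = n
    · simp only [hCdef, dif_pos h]; exact hcl _
    · simp only [hCdef, dif_neg h]; exact isClosed_empty
  · intro n m hnm
    by_cases h1 : ∃ i, e i = n
    · by_cases h2 : ∃ i, e i = m
      · simp only [Function.onFun, hCdef, dif_pos h1, dif_pos h2]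
        apply hdisj
        intro heq
        apply hnm
        rw [← h1.choose_spec, ← h2.choose_spec, heq]
      · simp only [Function.onFun, hCdef, dif_neg h2]
        exact disjoint_empty _
    · simp only [Function.onFun, hCdef, dif_neg h1]
      exact empty_disjoint _
  · apply eq_univ_of_forall
    intro x
    have hx : x ∈ ⋃ i, F i := hun ▸ mem_univ x
    obtain ⟨i, hi⟩ := mem_iUnion.mp hx
    have h : ∃ j, e j = e i := ⟨i, rfl⟩
    have hji : h.choose = i := he h.choose_spec
    refine mem_iUnion.mpr ⟨e i, ?_⟩
    simp only [hCdef, dif_pos h, hji]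
    exact hi
  · intro n
    by_cases h : ∃ i, e i = n
    · simp only [hCdef, dif_pos h]; exact hopen _
    · simp only [hCdef, dif_neg h]; exact openOntoImage_empty f

end AuxLemmas

/-- If the transfinite derived sequence reaches the empty set, then `f` is piecewise
open: `X` is a countable union of pairwise disjoint closed sets on each of which `f`
restricts to an open map onto its image. -/
theorem piecewise_open_of_derived_set_empty
    (X : Set Cantor) (Y : Type*) [TopologicalSpace Y]
    (f : X → Y) (hf : Continuous f)
    (Xseq : Ordinal → Set X)
    (h0 : Xseq 0 = univ)
    (hsucc : ∀ α : Ordinal,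
      Xseq (α + 1) =
        Xseq α \ ⋃₀ {V : Set X | RelClopen (Xseq α) V ∧ OpenOntoImage f V})
    (hlim : ∀ α : Ordinal, Order.IsSuccLimit α → Xseq α = ⋂ β : Ordinal, ⋂ (_ : β < α), Xseq β)
    (γ : Ordinal) (hγ : Xseq γ = ∅) :
    ∃ C : ℕ → Set X,
      (∀ n, IsClosed (C n)) ∧
      Pairwise (Function.onFun Disjoint C) ∧
      (⋃ n, C n) = univ ∧
      ∀ n, OpenOntoImage f (C n) := by
  classical
  obtain ⟨B, hBc, hB⟩ := exists_clopen_basis X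
  set 𝒱 : Ordinal → Set (Set X) :=
    fun α => {V | RelClopen (Xseq α) V ∧ OpenOntoImage f V} with h𝒱def
  -- the union removed at stage α is relatively open in `Xseq α`
  have relopen : ∀ α, ∃ O : Set X, IsOpen O ∧ ⋃₀ (𝒱 α) = O ∩ Xseq α := by
    intro α
    have h : ∀ V : {V // V ∈ 𝒱 α}, ∃ W : Set X, IsOpen W ∧ (V : Set X) = W ∩ Xseq α :=
      fun V => V.2.1.1
    choose W hW1 hW2 using h
    refine ⟨⋃ V, W V, isOpen_iUnion hW1, ?_⟩
    rw [sUnion_eq_iUnion, iUnion_inter]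
    exact iUnion_congr hW2
  choose O hO1 hO2 using relopen
  have hUsub : ∀ α, ⋃₀ (𝒱 α) ⊆ Xseq α := fun α => by
    rw [hO2]; exact inter_subset_right
  -- the strip removed at stage α
  have strip : ∀ α, Xseq α \ Xseq (α + 1) = ⋃₀ (𝒱 α) := by
    intro α
    rw [hsucc α]
    rw [_root_.sdiff_sdiff_right_self]
    exact inf_eq_right.mpr (hUsub α)
  have hsub1 : ∀ α, Xseq (α + 1) ⊆ Xseq α := fun α => by
    rw [hsucc α]; exact diff_subset
  -- monotonicity
  have mono : ∀ α β, β ≤ α → Xseq α ⊆ Xseq β := by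
    intro α
    induction α using Ordinal.limitRecOn with
    | zero =>
        intro β hβ
        rw [nonpos_iff_eq_zero.mp hβ]
    | add_one α ih =>
        intro β hβ
        rcases Order.le_succ_iff_eq_or_le.mp hβ with h | h
        · rw [h, ← Ordinal.add_one_eq_succ]
        · exact (hsub1 α).trans (ih β h)
    | limit α hα ih =>
        intro β hβ
        rcases eq_or_lt_of_le hβ with h | h
        · rw [h]
        · intro x hx
          rw [hlim α hα] at hx
          exact mem_iInter₂.mp hx β h
  -- closedness
  have closed : ∀ α, IsClosed (Xseq α) := by
    intro α
    induction α using Ordinal.limitRecOn with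
    | zero => rw [h0]; exact isClosed_univ
    | add_one α ih =>
        rw [hsucc α, hO2 α, diff_inter_self_eq_diff, diff_eq]
        exact ih.inter (hO1 α).isClosed_compl
    | limit α hα ih =>
        rw [hlim α hα]
        exact isClosed_iInter fun β => isClosed_iInter fun hβ => ih β hβ
  -- decompose each strip
  have hdecomp : ∀ α, ∃ D : ℕ → Set X, Pairwise (Function.onFun Disjoint D) ∧
      (⋃ n, D n) = ⋃₀ (𝒱 α) ∧
      (∀ n, ∃ K, IsClosed K ∧ D n = K ∩ Xseq α) ∧ (∀ n, OpenOntoImage f (D n)) :=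
    fun α => decomp B hBc hB f (Xseq α) (𝒱 α) (fun V hV => ⟨hV.1.1, hV.2⟩)
  choose D hD1 hD2 hD3 hD4 using hdecomp
  -- the set of active stages
  set S : Set Ordinal := {α | (Xseq α \ Xseq (α + 1)).Nonempty} with hSdef
  -- countability of S
  have hwit : ∀ α ∈ S, ∃ n, ∃ x ∈ Xseq α \ Xseq (α + 1), x ∈ B n ∧ B n ⊆ O α := by
    intro α hα
    obtain ⟨x, hx⟩ := hα
    have hx2 : x ∈ O α ∩ Xseq α := by rw [← hO2 α, ← strip α]; exact hx
    obtain ⟨s, ⟨n, rfl⟩, hxs, hsO⟩ := hB.exists_subset_of_mem_open hx2.1 (hO1 α)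
    exact ⟨n, x, hx, hxs, hsO⟩
  choose! g hg using hwit
  have hkey : ∀ α ∈ S, ∀ α' ∈ S, α < α' → g α ≠ g α' := by
    intro α hα α' hα' hlt heq
    obtain ⟨x', hx', hxB', _⟩ := hg α' hα'
    obtain ⟨x0, hx0, hx0B, hx0O⟩ := hg α hα
    have h1 : x' ∈ Xseq (α + 1) := by
      apply mono α' (α + 1) _ hx'.1
      rw [Ordinal.add_one_eq_succ]
      exact Order.succ_le_of_lt hlt
    have h2 : x' ∈ O α := hx0O (by rw [heq]; exact hxB')
    have h3 : x' ∈ Xseq α := mono α' α hlt.le hx'.1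
    have h4 : x' ∈ Xseq α \ Xseq (α + 1) := by
      rw [strip α, hO2 α]; exact ⟨h2, h3⟩
    exact h4.2 h1
  have hScount : S.Countable := by
    rw [Set.countable_iff_exists_injOn]
    refine ⟨g, fun α hα α' hα' heq => ?_⟩
    rcases lt_trichotomy α α' with h | h | h
    · exact absurd heq (hkey α hα α' hα' h)
    · exact h
    · exact absurd heq.symm (hkey α' hα' α hα h)
  -- every point lies in some strip
  have cover : ∀ x : X, ∃ α ∈ S, x ∈ Xseq α \ Xseq (α + 1) := by
    intro x
    have hne : {α : Ordinal | x ∉ Xseq α}.Nonempty :=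
      ⟨γ, by simp only [mem_setOf_eq, hγ]; exact notMem_empty x⟩
    set μ := sInf {α : Ordinal | x ∉ Xseq α} with hμdef
    have hμ : x ∉ Xseq μ := csInf_mem hne
    have hmin : ∀ β < μ, x ∈ Xseq β := by
      intro β hβ
      by_contra h
      exact absurd hβ (not_lt.mpr (csInf_le' h))
    rcases Ordinal.zero_or_succ_or_isSuccLimit μ with h | ⟨β, h⟩ | h
    · rw [h, h0] at hμ; exact absurd (mem_univ x) hμ
    · have hβμ : β < μ := h ▸ Order.lt_succ β
      have hx1 : x ∈ Xseq β := hmin β hβμ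
      have hx2 : x ∉ Xseq (β + 1) := by rwa [Ordinal.add_one_eq_succ, h]
      exact ⟨β, ⟨x, hx1, hx2⟩, hx1, hx2⟩
    · exfalso
      apply hμ
      rw [hlim μ h]
      exact mem_iInter₂.mpr hmin
  -- assemble the final countable family
  have : Countable S := hScount.to_subtype
  set F : S × ℕ → Set X := fun p => D p.1.1 p.2 with hFdef
  have hDstrip : ∀ α n, D α n ⊆ Xseq α \ Xseq (α + 1) := by
    intro α n
    rw [strip α, ← hD2 α]
    exact subset_iUnion (D α) n
  have hFkey : ∀ (α α' : Ordinal), α < α' → ∀ n m, Disjoint (D α n) (D α' m) := by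
    intro α α' hlt n m
    rw [Set.disjoint_left]
    intro x hx hx'
    have h1 : x ∉ Xseq (α + 1) := (hDstrip α n hx).2
    apply h1
    apply mono α' (α + 1) _ (hDstrip α' m hx').1
    rw [Ordinal.add_one_eq_succ]
    exact Order.succ_le_of_lt hlt
  apply package f F
  · intro p
    obtain ⟨K, hK, hKeq⟩ := hD3 p.1.1 p.2
    show IsClosed (D p.1.1 p.2)
    rw [hKeq]
    exact hK.inter (closed p.1.1)
  · rintro ⟨⟨α, hα⟩, n⟩ ⟨⟨α', hα'⟩, m⟩ hne
    show Disjoint (D α n) (D α' m)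
    rcases lt_trichotomy α α' with h | h | h
    · exact hFkey α α' h n m
    · subst h
      have hnm : n ≠ m := by
        rintro rfl
        exact hne rfl
      exact hD1 α hnm
    · exact (hFkey α' α h m n).symm
  · apply eq_univ_of_forall
    intro x
    obtain ⟨α, hα, hx⟩ := cover x
    have hx2 : x ∈ ⋃ n, D α n := by rw [hD2 α, ← strip α]; exact hx
    obtain ⟨n, hn⟩ := mem_iUnion.mp hx2
    exact mem_iUnion.mpr ⟨(⟨α, hα⟩, n), hn⟩
  · intro p
    exact hD4 p.1.1 p.2
end

section
/- Let Z be a nonempty subspace of the Cantor set without isolated points and f : Z → Y a continuous map to a metric space such that f is nowhere open on Z (for every nonempty clopen U ⊆ Z, f|U is not open onto its image). Then for every point x ∈ Z and every neighborhood U of x, there exist points x_k ∈ U ∩ Z with x_k → x and points p_{k,l} ∈ f(Z) with p_{k,l} → f(x_k) as l → ∞ such that f⁻¹(p_{k,l}) is disjoint from a fixed neighborhood of x_k. -/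
open Set Topology Filter

def cyl (a : Cantor) (n : ℕ) : Set Cantor := {g | ∀ i < n, g i = a i}

lemma cyl_eq (a : Cantor) (n : ℕ) :
    cyl a n = ⋂ i ∈ Finset.range n, (fun g : Cantor => g i) ⁻¹' {a i} := by
  ext g; simp [cyl]

lemma isClopen_cyl (a : Cantor) (n : ℕ) : IsClopen (cyl a n) := by
  rw [cyl_eq]
  refine ⟨isClosed_biInter fun i _ => ?_, isOpen_biInter_finset fun i _ => ?_⟩
  · exact (isClosed_discrete _).preimage (continuous_apply i)
  · exact (isOpen_discrete _).preimage (continuous_apply i)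

lemma mem_cyl_self (a : Cantor) (n : ℕ) : a ∈ cyl a n := fun _ _ => rfl

lemma cyl_antitone (a : Cantor) {m n : ℕ} (h : m ≤ n) : cyl a n ⊆ cyl a m :=
  fun g hg i hi => hg i (lt_of_lt_of_le hi h)

lemma exists_cyl_subset {a : Cantor} {O : Set Cantor} (hO : O ∈ 𝓝 a) :
    ∃ n, cyl a n ⊆ O := by
  rw [nhds_pi, Filter.mem_pi] at hO
  obtain ⟨I, hI, t, ht, hsub⟩ := hO
  obtain ⟨n, hn⟩ := hI.bddAbove
  refine ⟨n + 1, fun g hg => hsub fun i hi => ?_⟩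
  rw [hg i (lt_of_le_of_lt (hn hi) (Nat.lt_succ_self n))]
  exact mem_of_mem_nhds (ht i)

lemma tendsto_of_cyl {g : ℕ → Cantor} {a : Cantor}
    (h : ∀ n, ∀ᶠ k in atTop, g k ∈ cyl a n) : Tendsto g atTop (𝓝 a) := by
  intro S hS
  obtain ⟨n, hn⟩ := exists_cyl_subset hS
  exact (h n).mono fun k hk => hn hk

section Main

variable {Z : Set Cantor} {Y : Type*} [MetricSpace Y] {f : Z → Y}

/-- `f` fails to be open (onto its image) at `z`. -/
def Fail (f : Z → Y) (z : Z) : Prop :=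
  ∃ W ∈ 𝓝 z, ∀ ε > (0 : ℝ), ∃ p ∈ Set.range f, dist p (f z) < ε ∧ f ⁻¹' {p} ∩ W = ∅

lemma dense_fail
    (hnw : ∀ U : Set Z, IsClopen U → U.Nonempty → ¬ OpenOntoImage f U)
    (x : Z) (n : ℕ) : ∃ z : Z, (z : Cantor) ∈ cyl x.val n ∧ Fail f z := by
  by_contra hcon
  push_neg at hcon
  set C : Set Z := Subtype.val ⁻¹' cyl x.val n with hC
  have hCclopen : IsClopen C := (isClopen_cyl _ _).preimage continuous_subtype_val
  have hxC : x ∈ C := mem_cyl_self _ _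
  refine hnw C hCclopen ⟨x, hxC⟩ ?_
  intro U hU
  have key : ∀ z : Z, z ∈ U ∩ C → ∃ ε > (0 : ℝ), ∀ p ∈ Set.range f,
      dist p (f z) < ε → (f ⁻¹' {p} ∩ (U ∩ C)).Nonempty := by
    intro z hz
    have hzfail := hcon z hz.2
    rw [Fail] at hzfail
    push_neg at hzfail
    have hWnhds : U ∩ C ∈ 𝓝 z := (hU.inter hCclopen.2).mem_nhds hz
    obtain ⟨ε, hε, hεp⟩ := hzfail (U ∩ C) hWnhds
    exact ⟨ε, hε, hεp⟩
  choose! ε hεpos hεp using key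
  refine ⟨⋃ (z : Z) (_ : z ∈ U ∩ C), Metric.ball (f z) (ε z), ?_, ?_⟩
  · exact isOpen_iUnion fun z => isOpen_iUnion fun _ => Metric.isOpen_ball
  · apply Set.Subset.antisymm
    · rintro q ⟨z, hz, rfl⟩
      exact ⟨Set.mem_iUnion.mpr ⟨z, Set.mem_iUnion.mpr ⟨hz,
        Metric.mem_ball_self (hεpos z hz)⟩⟩, ⟨z, hz.2, rfl⟩⟩
    · rintro q ⟨hq1, hq2⟩
      obtain ⟨z, hz⟩ := Set.mem_iUnion.mp hq1
      obtain ⟨hzUC, hqball⟩ := Set.mem_iUnion.mp hz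
      obtain ⟨w, hwC, hwq⟩ := hq2
      obtain ⟨v, hv1, hv2⟩ := hεp z hzUC q ⟨w, hwq⟩ (Metric.mem_ball.mp hqball)
      exact ⟨v, hv2, hv1⟩

end Main

theorem nowhere_open_inductive_step
    (Z : Set Cantor) (hne : Z.Nonempty)
    (hperf : ∀ z : Z, (𝓝[≠] z).NeBot)
    (Y : Type*) [MetricSpace Y]
    (f : Z → Y) (hf : Continuous f)
    (hnw : ∀ U : Set Z, IsClopen U → U.Nonempty → ¬ OpenOntoImage f U) :
    ∀ x : Z, ∀ U ∈ 𝓝 x,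
      ∃ xk : ℕ → Z,
        (∀ k, xk k ∈ U) ∧
        Tendsto xk atTop (𝓝 x) ∧
        ∃ (p : ℕ → ℕ → Y) (W : ℕ → Set Z),
          (∀ k, W k ∈ 𝓝 (xk k)) ∧
          (∀ k l, p k l ∈ Set.range f) ∧
          (∀ k, Tendsto (fun l => p k l) atTop (𝓝 (f (xk k)))) ∧
          (∀ k l, f ⁻¹' {p k l} ∩ W k = ∅) := by
  intro x U hU
  -- find a basic cylinder neighborhood of x inside U
  rw [nhds_subtype, Filter.mem_comap] at hU
  obtain ⟨S, hS, hSU⟩ := hU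
  obtain ⟨n₀, hn₀⟩ := exists_cyl_subset hS
  -- choose failure points in shrinking cylinders
  have hch : ∀ k : ℕ, ∃ z : Z, (z : Cantor) ∈ cyl x.val (n₀ + k) ∧ Fail f z :=
    fun k => dense_fail hnw x (n₀ + k)
  choose xk hcyl hfail using hch
  refine ⟨xk, ?_, ?_, ?_⟩
  · intro k
    exact hSU (hn₀ (cyl_antitone _ (Nat.le_add_right n₀ k) (hcyl k)))
  · rw [tendsto_subtype_rng]
    refine tendsto_of_cyl fun n => ?_
    filter_upwards [Filter.eventually_ge_atTop n] with k hk
    exact cyl_antitone _ (le_trans hk (Nat.le_add_left k n₀)) (hcyl k)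
  · choose W hW hp using hfail
    have hpl : ∀ k l : ℕ, ∃ q ∈ Set.range f,
        dist q (f (xk k)) < 1 / ((l : ℝ) + 1) ∧ f ⁻¹' {q} ∩ W k = ∅ :=
      fun k l => hp k (1 / ((l : ℝ) + 1)) (by positivity)
    choose p hp1 hp2 hp3 using hpl
    refine ⟨p, W, hW, hp1, fun k => ?_, hp3⟩
    rw [tendsto_iff_dist_tendsto_zero]
    exact squeeze_zero (fun l => dist_nonneg) (fun l => (hp2 k l).le)
      tendsto_one_div_add_atTop_nhds_zero_nat
end
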